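/- Let g : ℝ → [0,∞) be Lipschitz, μ > 0, and let χ₀ be the cutoff function that is 0 below the graph of g, 1 above the graph of (1+μ)g, and linearly interpolating in between. Then for every Carleson box B = (a,b) × (0, b−a) with a < b, the integral ∫_B |∇χ₀| dA ≤ C·log(1+μ)·(b−a) for a constant C depending only on the Lipschitz constant of g and μ; i.e., |∇χ₀| dA is a Carleson measure on ℂ⁺. -/

import Mathlib

open MeasureTheory

open Set

set_option maxHeartbeats 1000000



/-- On the open strip between the graphs, the derivative of `χ` is bounded by `K/η`. -/
lemma strip_bound {L : NNReal} {μ : ℝ} (hμ : 0 < μ) {g : ℝ → ℝ} {χ : ℝ × ℝ → ℝ}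
    (hg : LipschitzWith L g) (hg0 : ∀ ξ, 0 ≤ g ξ)
    (hmid : ∀ ξ η : ℝ, 0 < g ξ → g ξ ≤ η → η ≤ (1 + μ) * g ξ →
      χ (ξ, η) = (η - g ξ) / (μ * g ξ))
    {p : ℝ × ℝ} (h1 : g p.1 < p.2) (h2 : p.2 < (1 + μ) * g p.1) :
    ‖fderiv ℝ χ p‖ ≤ ((1 + μ) * (1 + (L : ℝ) + μ * L) / μ) / p.2 := by
  have hL : (0:ℝ) ≤ (L:ℝ) := L.coe_nonneg
  have hgp : 0 < g p.1 := by nlinarith [hg0 p.1]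
  have hη : 0 < p.2 := (hg0 p.1).trans_lt h1
  set M : ℝ := ((1 + μ) * (1 + (L : ℝ) + μ * L) / μ) / p.2 with hMdef
  have hM0 : 0 ≤ M := by positivity
  -- value of the local Lipschitz bound at the point is `< M`
  have hmM : 1 / (μ * g p.1) + p.2 * (L : ℝ) / (μ * (g p.1) ^ 2) < M := by
    have hA : 1 / (μ * g p.1) < (1 + μ) / (μ * p.2) := by
      rw [div_lt_div_iff₀ (by positivity) (by positivity)]
      nlinarith
    have hB : p.2 * (L : ℝ) / (μ * (g p.1) ^ 2) ≤ (1 + μ) * ((L : ℝ) + μ * L) / (μ * p.2) := by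
      rw [div_le_div_iff₀ (by positivity) (by positivity)]
      nlinarith [mul_le_mul h2.le h2.le hη.le (by positivity : (0:ℝ) ≤ (1 + μ) * g p.1),
        mul_nonneg hL hμ.le]
    have hMeq : M = (1 + μ) / (μ * p.2) + (1 + μ) * ((L : ℝ) + μ * L) / (μ * p.2) := by
      rw [hMdef]; field_simp; ring
    rw [hMeq]
    exact add_lt_add_of_lt_of_le hA hB
  -- choose δ by continuity
  set φ : ℝ → ℝ := fun t => 1 / (μ * (g p.1 - t)) + (p.2 + t) * (L : ℝ) / (μ * (g p.1 - t) ^ 2)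
    with hφdef
  have hφ0 : φ 0 = 1 / (μ * g p.1) + p.2 * (L : ℝ) / (μ * (g p.1) ^ 2) := by
    simp [hφdef]
  have hφc : ContinuousAt φ 0 := by
    apply ContinuousAt.add
    · exact continuousAt_const.div (by fun_prop) (by simpa using (by positivity : 0 < μ * g p.1).ne')
    · exact (by fun_prop : ContinuousAt (fun t => (p.2 + t) * (L:ℝ)) 0).div (by fun_prop)
        (by simpa using (by positivity : 0 < μ * (g p.1) ^ 2).ne')
  have hev : φ ⁻¹' Iio M ∈ nhds (0:ℝ) := hφc (Iio_mem_nhds (by rw [hφ0]; exact hmM))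
  obtain ⟨ε, hε, hsub⟩ := Metric.mem_nhds_iff.1 hev
  set δ : ℝ := min (ε / 2) (g p.1 / 2) with hδdef
  have hδ0 : 0 < δ := lt_min (by positivity) (by positivity)
  have hδgp : δ < g p.1 := (min_le_right _ _).trans_lt (by linarith)
  have hφδ : φ δ < M := by
    apply hsub
    simp only [Metric.mem_ball, Real.dist_eq, sub_zero, abs_of_pos hδ0]
    exact (min_le_left _ _).trans_lt (by linarith)
  set c : ℝ := g p.1 - δ with hcdef
  have hc : 0 < c := by simp only [hcdef]; linarith
  set r : ℝ := δ / ((L : ℝ) + 1) with hrdef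
  have hr0 : 0 < r := by positivity
  have hrδ : r ≤ δ := by
    rw [hrdef, div_le_iff₀ (by positivity)]; nlinarith
  set s : Set (ℝ × ℝ) := {q : ℝ × ℝ | g q.1 < q.2 ∧ q.2 < (1 + μ) * g q.1} ∩ Metric.ball p r
    with hsdef
  have hsopen : IsOpen s := by
    apply IsOpen.inter _ Metric.isOpen_ball
    exact (isOpen_lt (hg.continuous.comp continuous_fst) continuous_snd).inter
      (isOpen_lt continuous_snd ((continuous_const.mul hg.continuous).comp continuous_fst))
  have hps : p ∈ s := ⟨⟨h1, h2⟩, Metric.mem_ball_self hr0⟩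
  have hsnhds : s ∈ nhds p := hsopen.mem_nhds hps
  -- facts about points of s
  have hfacts : ∀ q ∈ s, c ≤ g q.1 ∧ q.2 ≤ p.2 + δ ∧
      χ q = (q.2 - g q.1) / (μ * g q.1) := by
    rintro q ⟨⟨hq1, hq2⟩, hqball⟩
    have hd1 : dist q.1 p.1 ≤ dist q p := by
      rw [Prod.dist_eq]; exact le_max_left _ _
    have hd2 : dist q.2 p.2 ≤ dist q p := by
      rw [Prod.dist_eq]; exact le_max_right _ _
    have hdr : dist q p < r := Metric.mem_ball.1 hqball
    have hgq : c ≤ g q.1 := by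
      have := hg.dist_le_mul q.1 p.1
      have h' : dist (g q.1) (g p.1) ≤ (L : ℝ) * r := by
        calc dist (g q.1) (g p.1) ≤ (L : ℝ) * dist q.1 p.1 := this
        _ ≤ (L : ℝ) * r := mul_le_mul_of_nonneg_left (hd1.trans hdr.le) hL
      have hLr : (L : ℝ) * r ≤ δ := by
        rw [hrdef, ← mul_div_assoc, div_le_iff₀ (by positivity)]
        nlinarith
      have := abs_sub_le_iff.1 (by rwa [Real.dist_eq] at h' : |g q.1 - g p.1| ≤ (L:ℝ) * r)
      simp only [hcdef]; linarith [this.2]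
    refine ⟨hgq, ?_, ?_⟩
    · have hd2' : |q.2 - p.2| ≤ δ := by
        rw [← Real.dist_eq]; exact hd2.trans (hdr.le.trans hrδ)
      linarith [(abs_sub_le_iff.1 hd2').1]
    · have hq0 : 0 < g q.1 := hc.trans_le hgq
      have := hmid q.1 q.2 hq0 hq1.le hq2.le
      simpa using this
  -- the Lipschitz estimate on s
  have hlip : LipschitzOnWith (Real.toNNReal M) χ s := by
    rw [lipschitzOnWith_iff_dist_le_mul]
    intro q hq q' hq'
    obtain ⟨hgq, hq2, hχq⟩ := hfacts q hq
    obtain ⟨hgq', hq2', hχq'⟩ := hfacts q' hq'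
    have hx : 0 < g q.1 := hc.trans_le hgq
    have hy : 0 < g q'.1 := hc.trans_le hgq'
    have hη' : 0 < q'.2 := hy.trans hq'.1.1
    set d : ℝ := dist q q' with hddef
    have hd0 : 0 ≤ d := dist_nonneg
    have hd1 : |q.1 - q'.1| ≤ d := by
      rw [← Real.dist_eq, hddef, Prod.dist_eq]; exact le_max_left _ _
    have hd2 : |q.2 - q'.2| ≤ d := by
      rw [← Real.dist_eq, hddef, Prod.dist_eq]; exact le_max_right _ _
    have hgd : |g q'.1 - g q.1| ≤ (L : ℝ) * d := by
      rw [← Real.dist_eq]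
      calc dist (g q'.1) (g q.1) ≤ (L : ℝ) * dist q'.1 q.1 := hg.dist_le_mul _ _
      _ ≤ (L : ℝ) * d := by
          have h : dist q'.1 q.1 ≤ d := by
            rw [hddef, dist_comm q q', Prod.dist_eq]; exact le_max_left _ _
          exact mul_le_mul_of_nonneg_left h hL
    have key : χ q - χ q' =
        (g q'.1 * (q.2 - q'.2) + q'.2 * (g q'.1 - g q.1)) / (μ * g q.1 * g q'.1) := by
      rw [hχq, hχq']; field_simp; ring
    have habs : |χ q - χ q'| ≤ (g q'.1 * d + q'.2 * ((L : ℝ) * d)) / (μ * g q.1 * g q'.1) := by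
      rw [key, abs_div, abs_of_pos (by positivity : 0 < μ * g q.1 * g q'.1)]
      gcongr
      calc |g q'.1 * (q.2 - q'.2) + q'.2 * (g q'.1 - g q.1)|
          ≤ |g q'.1 * (q.2 - q'.2)| + |q'.2 * (g q'.1 - g q.1)| := abs_add_le _ _
        _ = g q'.1 * |q.2 - q'.2| + q'.2 * |g q'.1 - g q.1| := by
            rw [abs_mul, abs_mul, abs_of_pos hy, abs_of_pos hη']
        _ ≤ g q'.1 * d + q'.2 * ((L : ℝ) * d) := by
            have h1' := mul_le_mul_of_nonneg_left hd2 hy.le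
            have h2' := mul_le_mul_of_nonneg_left hgd hη'.le
            linarith
    have hsplit : (g q'.1 * d + q'.2 * ((L : ℝ) * d)) / (μ * g q.1 * g q'.1) =
        d / (μ * g q.1) + q'.2 * (L : ℝ) * d / (μ * g q.1 * g q'.1) := by
      field_simp
    have hmono : d / (μ * g q.1) + q'.2 * (L : ℝ) * d / (μ * g q.1 * g q'.1) ≤
        d / (μ * c) + (p.2 + δ) * (L : ℝ) * d / (μ * c * c) := by
      gcongr
    have hφform : d / (μ * c) + (p.2 + δ) * (L : ℝ) * d / (μ * c * c) = φ δ * d := by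
      simp only [hφdef, hcdef]
      field_simp
    have hdist : dist (χ q) (χ q') ≤ M * d := by
      rw [Real.dist_eq]
      calc |χ q - χ q'| ≤ (g q'.1 * d + q'.2 * ((L : ℝ) * d)) / (μ * g q.1 * g q'.1) := habs
        _ = d / (μ * g q.1) + q'.2 * (L : ℝ) * d / (μ * g q.1 * g q'.1) := hsplit
        _ ≤ d / (μ * c) + (p.2 + δ) * (L : ℝ) * d / (μ * c * c) := hmono
        _ = φ δ * d := hφform
        _ ≤ M * d := mul_le_mul_of_nonneg_right hφδ.le hd0
    calc dist (χ q) (χ q') ≤ M * d := hdist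
      _ = (Real.toNNReal M : ℝ) * dist q q' := by rw [Real.coe_toNNReal _ hM0, hddef]
  have := norm_fderiv_le_of_lipschitzOn ℝ hsnhds hlip
  rwa [Real.coe_toNNReal _ hM0] at this


/-- The graph of a measurable function is a null set in the plane. -/
lemma graph_null (f : ℝ → ℝ) (hf : Measurable f) :
    volume {p : ℝ × ℝ | p.2 = f p.1} = 0 := by
  rw [Measure.volume_eq_prod, Measure.prod_apply (measurableSet_graph hf)]
  have h : ∀ x : ℝ, (Prod.mk x ⁻¹' {p : ℝ × ℝ | p.2 = f p.1}) = {f x} := by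
    intro x; ext y; simp [Set.mem_preimage]
  simp [h]

lemma inner_bound {K μ : ℝ} (hK : 0 ≤ K) (hμ : 0 < μ) {c : ℝ} (hc : 0 ≤ c) :
    ∫⁻ η in Set.Icc c ((1 + μ) * c) ∩ Set.Ioi 0, ENNReal.ofReal (K / η) ≤
      ENNReal.ofReal (K * Real.log (1 + μ)) := by
  rcases eq_or_lt_of_le hc with h0 | h0
  · have : Set.Icc c ((1 + μ) * c) ∩ Set.Ioi 0 = (∅ : Set ℝ) := by
      rw [← h0]
      ext x; simp only [Set.mem_inter_iff, Set.mem_Icc, Set.mem_Ioi, Set.mem_empty_iff_false,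
        iff_false, not_and, and_imp, mul_zero]
      intro h1 h2; linarith
    rw [this]; simp
  · have hd : c ≤ (1 + μ) * c := by nlinarith
    have hsub : Set.Icc c ((1 + μ) * c) ∩ Set.Ioi 0 = Set.Icc c ((1 + μ) * c) := by
      apply Set.inter_eq_left.2
      intro x hx; exact lt_of_lt_of_le h0 hx.1
    rw [hsub]
    have hcont : ContinuousOn (fun η : ℝ => K / η) (Set.Icc c ((1 + μ) * c)) := by
      apply ContinuousOn.div continuousOn_const continuousOn_id
      intro x hx; exact (lt_of_lt_of_le h0 hx.1).ne'
    have hInt : IntegrableOn (fun η : ℝ => K / η) (Set.Icc c ((1 + μ) * c)) :=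
      hcont.integrableOn_Icc
    have hnn : 0 ≤ᵐ[volume.restrict (Set.Icc c ((1 + μ) * c))] fun η : ℝ => K / η := by
      filter_upwards [ae_restrict_mem measurableSet_Icc] with x hx
      have : 0 < x := lt_of_lt_of_le h0 hx.1
      positivity
    rw [← ofReal_integral_eq_lintegral_ofReal hInt hnn]
    apply ENNReal.ofReal_le_ofReal
    have : ∫ η in Set.Icc c ((1 + μ) * c), K / η = K * Real.log (1 + μ) := by
      rw [MeasureTheory.integral_Icc_eq_integral_Ioc,
        ← intervalIntegral.integral_of_le hd]
      simp only [div_eq_mul_inv]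
      rw [intervalIntegral.integral_const_mul, integral_inv_of_pos h0 (by nlinarith)]
      congr 1
      rw [mul_div_assoc, div_self h0.ne', mul_one]
    rw [this]

/-- `|∇χ₀| dA` is a Carleson measure on the upper half-plane:
`∫_B |∇χ₀| ≤ C·log(1+μ)·(b−a)` on every Carleson box `B = (a,b)×(0,b−a)`. -/
theorem stmt_5 (L : NNReal) (μ : ℝ) (hμ : 0 < μ) :
    ∃ C > 0, ∀ (g : ℝ → ℝ) (χ : ℝ × ℝ → ℝ),
      LipschitzWith L g → (∀ ξ, 0 ≤ g ξ) →
      (∀ ξ η : ℝ, 0 < η → η < g ξ → χ (ξ, η) = 0) →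
      (∀ ξ η : ℝ, 0 < g ξ → g ξ ≤ η → η ≤ (1 + μ) * g ξ →
        χ (ξ, η) = (η - g ξ) / (μ * g ξ)) →
      (∀ ξ η : ℝ, 0 < η → (1 + μ) * g ξ < η → χ (ξ, η) = 1) →
      ∀ a b : ℝ, a < b →
        ∫⁻ p in Set.Ioo a b ×ˢ Set.Ioo (0 : ℝ) (b - a),
            ENNReal.ofReal ‖fderiv ℝ χ p‖ ≤
          ENNReal.ofReal (C * Real.log (1 + μ) * (b - a)) := by
  set K : ℝ := (1 + μ) * (1 + (L : ℝ) + μ * L) / μ with hKdef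
  have hK0 : 0 < K := by positivity
  refine ⟨K, hK0, ?_⟩
  intro g χ hg hg0 hbelow hmid habove a b hab
  have hgm : Measurable g := hg.continuous.measurable
  have hlog : 0 ≤ Real.log (1 + μ) := Real.log_nonneg (by linarith)
  set B : ℝ × ℝ → ENNReal := fun p =>
    Set.indicator {q : ℝ × ℝ | g q.1 ≤ q.2 ∧ q.2 ≤ (1 + μ) * g q.1}
      (fun q => ENNReal.ofReal (K / q.2)) p with hBdef
  -- a.e. pointwise bound
  have hae : ∀ᵐ p ∂(volume.restrict (Set.Ioo a b ×ˢ Set.Ioo (0 : ℝ) (b - a))),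
      ENNReal.ofReal ‖fderiv ℝ χ p‖ ≤ B p := by
    have hbox : MeasurableSet (Set.Ioo a b ×ˢ Set.Ioo (0 : ℝ) (b - a)) :=
      measurableSet_Ioo.prod measurableSet_Ioo
    have h1 : ∀ᵐ p : ℝ × ℝ, p ∉ {q : ℝ × ℝ | q.2 = g q.1} :=
      measure_eq_zero_iff_ae_notMem.1 (graph_null g hgm)
    have h2 : ∀ᵐ p : ℝ × ℝ, p ∉ {q : ℝ × ℝ | q.2 = (1 + μ) * g q.1} :=
      measure_eq_zero_iff_ae_notMem.1 (graph_null (fun x => (1 + μ) * g x) (by fun_prop))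
    filter_upwards [ae_restrict_mem hbox, ae_restrict_of_ae h1, ae_restrict_of_ae h2]
      with p hp hne1 hne2
    have hpη : 0 < p.2 := hp.2.1
    rcases lt_trichotomy p.2 (g p.1) with hlt | heq | hgt
    · -- below the graph: χ is locally 0
      have hU : IsOpen {q : ℝ × ℝ | 0 < q.2 ∧ q.2 < g q.1} :=
        (isOpen_lt continuous_const continuous_snd).inter
          (isOpen_lt continuous_snd (hg.continuous.comp continuous_fst))
      have hev : χ =ᶠ[nhds p] fun _ => (0 : ℝ) := by
        filter_upwards [hU.mem_nhds ⟨hpη, hlt⟩] with q hq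
        exact hbelow q.1 q.2 hq.1 hq.2
      rw [hev.fderiv_eq, fderiv_fun_const]
      simp
    · exact absurd heq hne1
    · rcases lt_trichotomy p.2 ((1 + μ) * g p.1) with hlt' | heq' | hgt'
      · -- the strip
        have hb := strip_bound hμ hg hg0 hmid hgt hlt'
        have hmem : p ∈ {q : ℝ × ℝ | g q.1 ≤ q.2 ∧ q.2 ≤ (1 + μ) * g q.1} :=
          ⟨hgt.le, hlt'.le⟩
        rw [hBdef]
        simp only [Set.indicator_of_mem hmem]
        exact ENNReal.ofReal_le_ofReal (by rw [hKdef]; exact hb)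
      · exact absurd heq' hne2
      · -- above the graph: χ is locally 1
        have hU : IsOpen {q : ℝ × ℝ | 0 < q.2 ∧ (1 + μ) * g q.1 < q.2} :=
          (isOpen_lt continuous_const continuous_snd).inter
            (isOpen_lt ((continuous_const.mul hg.continuous).comp continuous_fst)
              continuous_snd)
        have hev : χ =ᶠ[nhds p] fun _ => (1 : ℝ) := by
          filter_upwards [hU.mem_nhds ⟨hpη, hgt'⟩] with q hq
          exact habove q.1 q.2 hq.1 hq.2
        rw [hev.fderiv_eq, fderiv_fun_const]
        simp
  -- integrate the bound
  have hBmeas : Measurable B := by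
    apply Measurable.indicator
    · exact (measurable_const.div measurable_snd).ennreal_ofReal
    · exact MeasurableSet.inter
        (measurableSet_le (hgm.comp measurable_fst) measurable_snd)
        (measurableSet_le measurable_snd ((measurable_const.mul hgm).comp measurable_fst))
  calc ∫⁻ p in Set.Ioo a b ×ˢ Set.Ioo (0 : ℝ) (b - a), ENNReal.ofReal ‖fderiv ℝ χ p‖
      ≤ ∫⁻ p in Set.Ioo a b ×ˢ Set.Ioo (0 : ℝ) (b - a), B p := lintegral_mono_ae hae
    _ ≤ ENNReal.ofReal (K * Real.log (1 + μ) * (b - a)) := by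
        rw [Measure.volume_eq_prod, ← Measure.prod_restrict,
          lintegral_prod _ hBmeas.aemeasurable]
        have hinner : ∀ ξ : ℝ, ∫⁻ η in Set.Ioo (0 : ℝ) (b - a), B (ξ, η) ≤
            ENNReal.ofReal (K * Real.log (1 + μ)) := by
          intro ξ
          have hrew : ∀ η : ℝ, B (ξ, η) =
              Set.indicator (Set.Icc (g ξ) ((1 + μ) * g ξ))
                (fun η => ENNReal.ofReal (K / η)) η := by
            intro η
            simp only [hBdef, Set.indicator_apply, Set.mem_setOf_eq, Set.mem_Icc]
          simp only [hrew]
          rw [lintegral_indicator measurableSet_Icc,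
            Measure.restrict_restrict measurableSet_Icc]
          calc ∫⁻ η in Set.Icc (g ξ) ((1 + μ) * g ξ) ∩ Set.Ioo (0 : ℝ) (b - a),
                ENNReal.ofReal (K / η)
              ≤ ∫⁻ η in Set.Icc (g ξ) ((1 + μ) * g ξ) ∩ Set.Ioi (0 : ℝ),
                ENNReal.ofReal (K / η) := by
                apply lintegral_mono'
                · exact Measure.restrict_mono
                    (Set.inter_subset_inter_right _ Set.Ioo_subset_Ioi_self) le_rfl
                · exact le_rfl
            _ ≤ ENNReal.ofReal (K * Real.log (1 + μ)) := inner_bound hK0.le hμ (hg0 ξ)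
        calc ∫⁻ ξ in Set.Ioo a b, ∫⁻ η in Set.Ioo (0 : ℝ) (b - a), B (ξ, η)
            ≤ ∫⁻ _ in Set.Ioo a b, ENNReal.ofReal (K * Real.log (1 + μ)) :=
              lintegral_mono fun ξ => hinner ξ
          _ = ENNReal.ofReal (K * Real.log (1 + μ)) * volume (Set.Ioo a b) :=
              setLIntegral_const _ _
          _ = ENNReal.ofReal (K * Real.log (1 + μ) * (b - a)) := by
              rw [Real.volume_Ioo, ← ENNReal.ofReal_mul (by positivity)]
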